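/- Every nonnegative integer flow of value F ≥ 1 (with nonnegative integer arc values, satisfying flow conservation, on a finite directed graph) supports a path from the source to the sink using only arcs with strictly positive flow value. -/
import Mathlib


/-- Net outflow of `x` at vertex `v`. -/
def excess {V A : Type} [Fintype A] [DecidableEq V] (src tgt : A → V)
    (x : A → ℤ) (v : V) : ℤ :=
  (∑ a ∈ Finset.univ.filter (fun a => src a = v), x a) -
    (∑ a ∈ Finset.univ.filter (fun a => tgt a = v), x a)

/-- A walk predicate: there is a walk from `v1` to `v` along positive arcs. -/
def Reach {V A : Type} (src tgt : A → V) (x : A → ℤ) (v1 v : V) : Prop :=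
  ∃ (k : ℕ) (p : Fin (k + 1) → A),
    src (p 0) = v1 ∧ tgt (p (Fin.last k)) = v ∧
    (∀ i, 0 < x (p i)) ∧
    ∀ i : Fin k, tgt (p i.castSucc) = src (p i.succ)

lemma reach_snoc {V A : Type} (src tgt : A → V) (x : A → ℤ) (v1 : V) {v : V}
    (h : Reach src tgt x v1 v) (a : A) (ha : src a = v) (hxa : 0 < x a) :
    Reach src tgt x v1 (tgt a) := by
  obtain ⟨k, p, h1, h2, h3, h4⟩ := h
  refine ⟨k + 1, Fin.snoc p a, ?_, ?_, ?_, ?_⟩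
  · rw [show (0 : Fin (k + 2)) = Fin.castSucc 0 by rfl, Fin.snoc_castSucc]
    exact h1
  · simp [Fin.snoc_last]
  · intro i
    refine Fin.lastCases ?_ ?_ i
    · simpa [Fin.snoc_last] using hxa
    · intro j; rw [Fin.snoc_castSucc]; exact h3 j
  · intro i
    refine Fin.lastCases ?_ ?_ i
    · rw [Fin.snoc_castSucc, show (Fin.last k).succ = Fin.last (k + 1) by rfl,
        Fin.snoc_last, h2, ha]
    · intro j
      rw [show (Fin.castSucc j).castSucc = (j.castSucc).castSucc from rfl,
        Fin.snoc_castSucc, Fin.succ_castSucc, Fin.snoc_castSucc]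
      exact h4 j

lemma reach_single {V A : Type} (src tgt : A → V) (x : A → ℤ) (v1 : V)
    (a : A) (ha : src a = v1) (hxa : 0 < x a) :
    Reach src tgt x v1 (tgt a) :=
  ⟨0, fun _ => a, ha, rfl, fun _ => hxa, fun i => i.elim0⟩

/-- every nonnegative integer flow of value `F ≥ 1` supports a
path (walk) from the source to the sink using only arcs of strictly positive
flow value. -/
theorem stmt_6 {V A : Type} [Fintype A] [DecidableEq V]
    (src tgt : A → V) (v1 vn : V) (hvv : v1 ≠ vn)
    (x : A → ℤ) (hx : ∀ a, 0 ≤ x a) (F : ℤ) (hF : 1 ≤ F)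
    (hsrc : excess src tgt x v1 = F) (hsnk : excess src tgt x vn = -F)
    (hcons : ∀ v, v ≠ v1 → v ≠ vn → excess src tgt x v = 0) :
    ∃ (k : ℕ) (p : Fin (k + 1) → A),
      src (p 0) = v1 ∧ tgt (p (Fin.last k)) = vn ∧
      (∀ i, 0 < x (p i)) ∧
      ∀ i : Fin k, tgt (p i.castSucc) = src (p i.succ) := by
  classical
  by_contra hcon
  have hnreach : ¬ Reach src tgt x v1 vn := hcon
  -- the set of vertices reachable from v1 (including v1)
  set S : Finset V :=
    (insert v1 (Finset.image tgt Finset.univ)).filter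
      (fun v => v = v1 ∨ Reach src tgt x v1 v) with hS
  have hv1S : v1 ∈ S := by simp [hS]
  have hvnS : vn ∉ S := by
    simp only [hS, Finset.mem_filter]
    rintro ⟨-, h | h⟩
    · exact hvv h.symm
    · exact hnreach h
  -- closure of S under positive arcs
  have hclosed : ∀ a : A, 0 < x a → src a ∈ S → tgt a ∈ S := by
    intro a hxa haS
    have hmem : tgt a ∈ insert v1 (Finset.image tgt Finset.univ) := by
      simp
    have hr : Reach src tgt x v1 (tgt a) := by
      rcases (Finset.mem_filter.1 haS).2 with h | h
      · exact reach_single src tgt x v1 a h hxa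
      · exact reach_snoc src tgt x v1 h a rfl hxa
    exact Finset.mem_filter.2 ⟨hmem, Or.inr hr⟩
  -- sum of excess over S equals F
  have hsum : ∑ v ∈ S, excess src tgt x v = F := by
    rw [Finset.sum_eq_single v1]
    · exact hsrc
    · intro v hvS hne
      refine hcons v hne (fun h => hvnS (h ▸ hvS))
    · intro h; exact absurd hv1S h
  -- but the sum telescopes to something ≤ 0
  have hle : ∑ v ∈ S, excess src tgt x v ≤ 0 := by
    have h1 : ∑ v ∈ S, excess src tgt x v =
        (∑ a ∈ Finset.univ.filter (fun a => src a ∈ S), x a) -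
        (∑ a ∈ Finset.univ.filter (fun a => tgt a ∈ S), x a) := by
      unfold excess
      rw [Finset.sum_sub_distrib,
        Finset.sum_fiberwise_eq_sum_filter Finset.univ S src x,
        Finset.sum_fiberwise_eq_sum_filter Finset.univ S tgt x]
    rw [h1, Finset.sum_filter, Finset.sum_filter, ← Finset.sum_sub_distrib]
    apply Finset.sum_nonpos
    intro a _
    by_cases hsa : src a ∈ S
    · by_cases hxa : 0 < x a
      · simp [hsa, hclosed a hxa hsa]
      · have hx0 : x a = 0 := le_antisymm (not_lt.1 hxa) (hx a)
        simp [hx0]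
    · simp only [hsa, if_false]
      by_cases hta : tgt a ∈ S
      · simpa [hta] using hx a
      · simp [hta]
  rw [hsum] at hle
  linarith
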